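/- (Eckart–Young theorem) Let ψ = ∑_{i≥1} λ_i (a_i ⊗ b_i) with orthonormal families (a_i), (b_i), λ_1 ≥ λ_2 ≥ ... > 0, ∑ λ_i² = 1. Then every vector φ ∈ A ⊗ B of Schmidt rank at most D with ‖φ‖ = 1 satisfies |⟨φ, ψ⟩| ≤ sqrt(∑_{i=1}^D λ_i²). -/

import Mathlib

open scoped ComplexInnerProductSpace

set_option maxHeartbeats 1000000

/-- The elementary tensor `u ⊗ v`, modeled concretely in
`EuclideanSpace ℂ (Fin dA × Fin dB) ≅ EuclideanSpace ℂ (Fin dA) ⊗ EuclideanSpace ℂ (Fin dB)`. -/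
noncomputable def tensorVec {dA dB : ℕ} (u : EuclideanSpace ℂ (Fin dA))
    (v : EuclideanSpace ℂ (Fin dB)) : EuclideanSpace ℂ (Fin dA × Fin dB) :=
  WithLp.toLp 2 (fun p => u p.1 * v p.2)

instance finWellFoundedLT (D : ℕ) : WellFoundedLT (Fin D) := inferInstance

lemma inner_tensorVec {dA dB : ℕ} (u u' : EuclideanSpace ℂ (Fin dA))
    (v v' : EuclideanSpace ℂ (Fin dB)) :
    ⟪tensorVec u v, tensorVec u' v'⟫ = ⟪u, u'⟫ * ⟪v, v'⟫ := by
  simp only [PiLp.inner_apply, RCLike.inner_apply, tensorVec, PiLp.toLp_apply, Finset.sum_mul_sum, map_mul]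
  rw [Fintype.sum_prod_type]
  apply Finset.sum_congr rfl
  intro i _
  apply Finset.sum_congr rfl
  intro p _
  ring

lemma sum_sq_mul_le {N D : ℕ} (lam : Fin N → ℝ) (hmono : Antitone lam) (hpos : ∀ i, 0 < lam i)
    (t : Fin N → ℝ) (ht0 : ∀ i, 0 ≤ t i) (ht1 : ∀ i, t i ≤ 1) (htD : ∑ i, t i ≤ D) :
    ∑ i, lam i ^ 2 * t i ≤
      ∑ i ∈ Finset.univ.filter (fun i : Fin N => (i : ℕ) < D), lam i ^ 2 := by
  classical
  by_cases hD : N ≤ D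
  · have hfil : Finset.univ.filter (fun i : Fin N => (i : ℕ) < D) = Finset.univ := by
      apply Finset.filter_true_of_mem
      intro i _
      exact lt_of_lt_of_le i.2 hD
    rw [hfil]
    apply Finset.sum_le_sum
    intro i _
    calc lam i ^ 2 * t i ≤ lam i ^ 2 * 1 := by
          apply mul_le_mul_of_nonneg_left (ht1 i) (sq_nonneg _)
      _ = lam i ^ 2 := mul_one _
  · push_neg at hD
    set d : Fin N := ⟨D, hD⟩ with hd
    set μ : ℝ := lam d ^ 2 with hμ
    have hμ0 : 0 ≤ μ := sq_nonneg _
    set S := Finset.univ.filter (fun i : Fin N => (i : ℕ) < D) with hS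
    have hcard : S.card = D := by
      have heq : S = Finset.univ.map (Fin.castLEEmb (le_of_lt hD)) := by
        ext j
        simp only [hS, Finset.mem_filter, Finset.mem_univ, true_and, Finset.mem_map]
        constructor
        · intro hj
          exact ⟨⟨j, hj⟩, by ext; simp⟩
        · rintro ⟨i, rfl⟩
          simpa using i.2
      rw [heq, Finset.card_map, Finset.card_univ, Fintype.card_fin]
    -- on S : lam i ^ 2 ≥ μ; off S : lam i ^ 2 ≤ μ
    have hin : ∀ i ∈ S, μ ≤ lam i ^ 2 := by
      intro i hi
      have : i ≤ d := by
        rw [Fin.le_def]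
        exact le_of_lt (Finset.mem_filter.mp hi).2
      exact pow_le_pow_left₀ (le_of_lt (hpos d)) (hmono this) 2
    have hout : ∀ i ∈ Finset.univ.filter (fun i : Fin N => ¬ (i : ℕ) < D), lam i ^ 2 ≤ μ := by
      intro i hi
      have hiS : (i : ℕ) ≥ D := by
        have := (Finset.mem_filter.mp hi).2
        omega
      have : d ≤ i := by rw [Fin.le_def]; exact hiS
      exact pow_le_pow_left₀ (le_of_lt (hpos i)) (hmono this) 2
    have hsplit := (Finset.sum_filter_add_sum_filter_not Finset.univ
      (fun i : Fin N => (i : ℕ) < D) (fun i => lam i ^ 2 * t i)).symm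
    rw [hsplit]
    have h1 : ∑ i ∈ S, lam i ^ 2 * t i ≤ ∑ i ∈ S, (lam i ^ 2 - μ * (1 - t i)) := by
      apply Finset.sum_le_sum
      intro i hi
      have h1t : 0 ≤ 1 - t i := by linarith [ht1 i]
      nlinarith [hin i hi, mul_le_mul_of_nonneg_right (hin i hi) h1t]
    have h2 : ∑ i ∈ Finset.univ.filter (fun i : Fin N => ¬ (i : ℕ) < D), lam i ^ 2 * t i ≤
        ∑ i ∈ Finset.univ.filter (fun i : Fin N => ¬ (i : ℕ) < D), μ * t i := by
      apply Finset.sum_le_sum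
      intro i hi
      exact mul_le_mul_of_nonneg_right (hout i hi) (ht0 i)
    have hkey : ∑ i ∈ S, (lam i ^ 2 - μ * (1 - t i)) +
        ∑ i ∈ Finset.univ.filter (fun i : Fin N => ¬ (i : ℕ) < D), μ * t i ≤ ∑ i ∈ S, lam i ^ 2 := by
      rw [Finset.sum_sub_distrib]
      have : ∑ i ∈ S, μ * (1 - t i) = μ * (D - ∑ i ∈ S, t i) := by
        rw [← Finset.mul_sum, Finset.sum_sub_distrib, Finset.sum_const, hcard,
          nsmul_eq_mul, mul_one]
      rw [this, ← Finset.mul_sum]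
      have hsum : ∑ i ∈ S, t i + ∑ i ∈ Finset.univ.filter (fun i : Fin N => ¬ (i : ℕ) < D), t i = ∑ i, t i := by
        have := Finset.sum_filter_add_sum_filter_not Finset.univ
          (fun i : Fin N => (i : ℕ) < D) t
        simpa [hS] using this
      nlinarith [hμ0, htD, hsum]
    calc _ ≤ ∑ i ∈ S, (lam i ^ 2 - μ * (1 - t i)) +
        ∑ i ∈ Finset.univ.filter (fun i : Fin N => ¬ (i : ℕ) < D), μ * t i := add_le_add h1 h2
      _ ≤ ∑ i ∈ S, lam i ^ 2 := hkey

/-- Eckart–Young theorem: if `ψ = ∑ λᵢ aᵢ ⊗ bᵢ` is a Schmidt decomposition with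
`λ 0 ≥ λ 1 ≥ ⋯ > 0` and `∑ λᵢ² = 1`, then every unit vector `φ` of Schmidt rank at most `D`
satisfies `|⟨φ, ψ⟩| ≤ sqrt (∑_{i < D} λᵢ²)`. -/
theorem eckart_young {dA dB N : ℕ}
    (a : Fin N → EuclideanSpace ℂ (Fin dA)) (ha : Orthonormal ℂ a)
    (b : Fin N → EuclideanSpace ℂ (Fin dB)) (hb : Orthonormal ℂ b)
    (lam : Fin N → ℝ) (hmono : Antitone lam) (hpos : ∀ i, 0 < lam i)
    (hnorm : ∑ i, (lam i) ^ 2 = 1)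
    (ψ : EuclideanSpace ℂ (Fin dA × Fin dB))
    (hψ : ψ = ∑ i, (lam i : ℂ) • tensorVec (a i) (b i))
    (D : ℕ) (φ : EuclideanSpace ℂ (Fin dA × Fin dB)) (hφn : ‖φ‖ = 1)
    (hrank : ∃ (x : Fin D → EuclideanSpace ℂ (Fin dA)) (y : Fin D → EuclideanSpace ℂ (Fin dB)),
      φ = ∑ j, tensorVec (x j) (y j)) :
    ‖⟪φ, ψ⟫‖ ≤ Real.sqrt (∑ i ∈ Finset.univ.filter (fun i : Fin N => (i : ℕ) < D),
      (lam i) ^ 2) := by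
  classical
  obtain ⟨x, y, hxy⟩ := hrank
  set f : Fin D → EuclideanSpace ℂ (Fin dA) := InnerProductSpace.gramSchmidtNormed ℂ x with hf
  set ν : Fin D → ℝ := fun k => if f k = 0 then 0 else 1 with hν
  -- inner products of the (sub-)orthonormal family f
  have hff : ∀ k l, ⟪f k, f l⟫ = if k = l then ((ν k : ℝ) : ℂ) else 0 := by
    intro k l
    by_cases hkl : k = l
    · subst hkl
      rw [if_pos rfl]
      by_cases h0 : f k = 0
      · simp [h0, hν]
      · have h0' : InnerProductSpace.gramSchmidtNormed ℂ x k ≠ 0 := by rw [← hf]; exact h0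
        rw [inner_self_eq_norm_sq_to_K, hf, InnerProductSpace.gramSchmidtNormed_unit_length' h0']
        simp [hν, h0]
    · rw [if_neg hkl, hf]
      simp [InnerProductSpace.gramSchmidtNormed, inner_smul_left, inner_smul_right,
        InnerProductSpace.gramSchmidt_orthogonal ℂ x hkl]
  set P : EuclideanSpace ℂ (Fin dA) → EuclideanSpace ℂ (Fin dA) :=
    fun u => ∑ k, (⟪f k, u⟫ : ℂ) • f k with hPdef
  have hPapply : ∀ u, P u = ∑ k, (⟪f k, u⟫ : ℂ) • f k := fun u => rfl
  have hPf : ∀ l, P (f l) = f l := by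
    intro l
    rw [hPapply, Finset.sum_eq_single l]
    · rw [hff, if_pos rfl]
      by_cases h0 : f l = 0
      · simp [h0]
      · simp [hν, h0]
    · intro k _ hk
      rw [hff, if_neg hk, zero_smul]
    · intro h
      exact absurd (Finset.mem_univ l) h
  have hfix : ∀ w ∈ Submodule.span ℂ (Set.range f), P w = w := by
    intro w hw
    refine Submodule.span_induction (p := fun w _ => P w = w) ?_ ?_ ?_ ?_ hw
    · rintro w ⟨l, rfl⟩
      exact hPf l
    · simp [hPapply]
    · intro u v hu' hv' hu hv
      have h1 : P (u + v) = P u + P v := by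
        simp [hPapply, inner_add_right, add_smul, Finset.sum_add_distrib]
      rw [h1, hu, hv]
    · intro c u hu' hu
      have h1 : P (c • u) = c • P u := by
        simp [hPapply, inner_smul_right, mul_smul, Finset.smul_sum]
      rw [h1, hu]
  have hxmem : ∀ j, x j ∈ Submodule.span ℂ (Set.range f) := by
    intro j
    rw [hf, InnerProductSpace.span_gramSchmidtNormed_range, InnerProductSpace.span_gramSchmidt]
    exact Submodule.subset_span (Set.mem_range_self j)
  have hadj : ∀ w u, ⟪w, P u⟫ = ⟪P w, u⟫ := by
    intro w u
    rw [hPapply, hPapply, inner_sum, sum_inner]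
    apply Finset.sum_congr rfl
    intro k _
    rw [inner_smul_right, inner_smul_left, ← inner_conj_symm w (f k)]
    ring
  have hrepl : ∀ (u : EuclideanSpace ℂ (Fin dA)) (v : EuclideanSpace ℂ (Fin dB)),
      ⟪φ, tensorVec u v⟫ = ⟪φ, tensorVec (P u) v⟫ := by
    intro u v
    rw [hxy, sum_inner, sum_inner]
    apply Finset.sum_congr rfl
    intro j _
    rw [inner_tensorVec, inner_tensorVec]
    congr 1
    rw [hadj, hfix _ (hxmem j)]
  set χ : EuclideanSpace ℂ (Fin dA × Fin dB) :=
    ∑ i, (lam i : ℂ) • tensorVec (P (a i)) (b i) with hχ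
  have hinner : ⟪φ, ψ⟫ = ⟪φ, χ⟫ := by
    rw [hψ, hχ, inner_sum, inner_sum]
    apply Finset.sum_congr rfl
    intro i _
    rw [inner_smul_right, inner_smul_right, hrepl]
  set t : Fin N → ℝ := fun i => ∑ k, ‖⟪f k, a i⟫‖ ^ 2 * ν k with htdef
  have ht0 : ∀ i, 0 ≤ t i := by
    intro i
    apply Finset.sum_nonneg
    intro k _
    apply mul_nonneg (sq_nonneg _)
    by_cases h : f k = 0 <;> simp [hν, h]
  -- the orthonormal subfamily
  have hfo : Orthonormal ℂ (fun i : {i | f i ≠ 0} => f i) := by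
    have := InnerProductSpace.gramSchmidtNormed_orthonormal' (𝕜 := ℂ) x
    simp only [← hf] at this
    exact this
  have hconv : ∀ (r : Fin N → Fin D → ℝ) (i : Fin N),
      ∑ k, r i k * ν k = ∑ k : {i | f i ≠ 0}, r i k := by
    intro r i
    have h1 : ∀ k, r i k * ν k = if f k ≠ 0 then r i k else 0 := by
      intro k
      by_cases h : f k = 0 <;> simp [hν, h]
    rw [Finset.sum_congr rfl (fun k _ => h1 k), ← Finset.sum_filter]
    exact Finset.sum_subtype _ (by simp) _
  have ht1 : ∀ i, t i ≤ 1 := by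
    intro i
    rw [htdef]
    simp only []
    rw [hconv (fun i k => ‖⟪f k, a i⟫‖ ^ 2) i]
    have hbessel := hfo.sum_inner_products_le (a i) (s := Finset.univ)
    calc ∑ k : {i | f i ≠ 0}, ‖⟪f k.1, a i⟫‖ ^ 2 ≤ ‖a i‖ ^ 2 := hbessel
      _ = 1 := by rw [ha.1 i]; norm_num
  have htD : ∑ i, t i ≤ (D : ℝ) := by
    calc ∑ i, t i = ∑ i, ∑ k : {i | f i ≠ 0}, ‖⟪f k.1, a i⟫‖ ^ 2 :=
          Finset.sum_congr rfl fun i _ => hconv (fun i k => ‖⟪f k, a i⟫‖ ^ 2) i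
      _ = ∑ k : {i | f i ≠ 0}, ∑ i, ‖⟪a i, f k.1⟫‖ ^ 2 := by
          rw [Finset.sum_comm]
          apply Finset.sum_congr rfl
          intro k _
          apply Finset.sum_congr rfl
          intro i _
          rw [norm_inner_symm]
      _ ≤ ∑ _k : {i | f i ≠ 0}, (1 : ℝ) := by
          apply Finset.sum_le_sum
          intro k _
          have hbessel := ha.sum_inner_products_le (f k.1) (s := Finset.univ)
          have hek : ‖f k.1‖ = 1 := hfo.1 k
          rw [hek] at hbessel
          simpa using hbessel
      _ = (Fintype.card {i | f i ≠ 0} : ℝ) := by simp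
      _ ≤ (D : ℝ) := by
          have := Fintype.card_le_of_injective
            (fun k : {i | f i ≠ 0} => (k.1 : Fin D)) Subtype.val_injective
          rw [Fintype.card_fin] at this
          exact_mod_cast this
  -- ⟪P u, P u⟫ and the norm of χ
  have hPt : ∀ i, ⟪P (a i), P (a i)⟫ = ((t i : ℝ) : ℂ) := by
    intro i
    rw [hPapply, sum_inner]
    have hterm : ∀ k, ⟪(⟪f k, a i⟫ : ℂ) • f k, ∑ l, (⟪f l, a i⟫ : ℂ) • f l⟫
        = ((‖⟪f k, a i⟫‖ ^ 2 * ν k : ℝ) : ℂ) := by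
      intro k
      rw [inner_sum, Finset.sum_eq_single k]
      · rw [inner_smul_left, inner_smul_right, hff, if_pos rfl]
        calc (starRingEnd ℂ) ⟪f k, a i⟫ * (⟪f k, a i⟫ * ((ν k : ℝ) : ℂ))
            = ((starRingEnd ℂ) ⟪f k, a i⟫ * ⟪f k, a i⟫) * ((ν k : ℝ) : ℂ) := by ring
          _ = ((Complex.normSq ⟪f k, a i⟫ : ℝ) : ℂ) * ((ν k : ℝ) : ℂ) := by
              rw [mul_comm ((starRingEnd ℂ) _), Complex.mul_conj]
          _ = _ := by
              rw [Complex.normSq_eq_norm_sq]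
              push_cast
              rfl
      · intro l _ hlk
        rw [inner_smul_left, inner_smul_right, hff, if_neg (fun h => hlk h.symm)]
        simp
      · intro h
        exact absurd (Finset.mem_univ k) h
    rw [Finset.sum_congr rfl (fun k _ => hterm k)]
    simp only [htdef]
    norm_cast
  have hbi : ∀ i j, (⟪b i, b j⟫ : ℂ) = if i = j then 1 else 0 := by
    intro i j
    by_cases h : i = j
    · subst h; simp [inner_self_eq_norm_sq_to_K, hb.1 i]
    · simp [h, hb.2 h]
  have hC : ⟪χ, χ⟫ = ((∑ i, lam i ^ 2 * t i : ℝ) : ℂ) := by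
    rw [hχ, sum_inner]
    have hout : ∀ i, ⟪(lam i : ℂ) • tensorVec (P (a i)) (b i),
        ∑ j, (lam j : ℂ) • tensorVec (P (a j)) (b j)⟫
        = ((lam i ^ 2 * t i : ℝ) : ℂ) := by
      intro i
      rw [inner_sum, Finset.sum_eq_single i]
      · rw [inner_smul_left, inner_smul_right, inner_tensorVec, hbi, if_pos rfl, mul_one,
          hPt, Complex.conj_ofReal]
        push_cast
        ring
      · intro j _ hji
        rw [inner_smul_left, inner_smul_right, inner_tensorVec, hbi,
          if_neg (fun h => hji h.symm)]
        simp
      · intro h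
        exact absurd (Finset.mem_univ i) h
    rw [Finset.sum_congr rfl (fun i _ => hout i)]
    push_cast
    rfl
  have hnormχ : ‖χ‖ ^ 2 = ∑ i, lam i ^ 2 * t i := by
    have h1 : ⟪χ, χ⟫ = ((‖χ‖ ^ 2 : ℝ) : ℂ) := by
      rw [inner_self_eq_norm_sq_to_K]; norm_cast
    rw [h1] at hC
    exact_mod_cast hC
  have hfinal : ∑ i, lam i ^ 2 * t i ≤
      ∑ i ∈ Finset.univ.filter (fun i : Fin N => (i : ℕ) < D), lam i ^ 2 :=
    sum_sq_mul_le lam hmono hpos t ht0 ht1 htD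
  have hb1 : ‖⟪φ, ψ⟫‖ ≤ ‖χ‖ := by
    rw [hinner]
    calc ‖⟪φ, χ⟫‖ ≤ ‖φ‖ * ‖χ‖ := norm_inner_le_norm _ _
      _ = ‖χ‖ := by rw [hφn, one_mul]
  have hχle : ‖χ‖ ≤ Real.sqrt (∑ i ∈ Finset.univ.filter (fun i : Fin N => (i : ℕ) < D),
      lam i ^ 2) := by
    have h2 : ‖χ‖ = Real.sqrt (∑ i, lam i ^ 2 * t i) := by
      rw [← hnormχ, Real.sqrt_sq (norm_nonneg _)]
    rw [h2]
    exact Real.sqrt_le_sqrt hfinal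
  exact hb1.trans hχle
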